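/- arXiv:1402.1317 — 3 statements merged into one kernel-verified Lean document; each statement's English description precedes it below -/
import Mathlib

section
/- Let ≼ be the relation on ℕ × ℕ defined by (m₁,m₂) ≼ (n₁,n₂) if and only if there exists a 𝒥-morphism datum from (m₁,m₂) to (n₁,n₂) (a pair of injections α₁ : Fin m₁ → Fin n₁ and α₂ : Fin m₂ → Fin n₂ together with a bijection between the complements of their images). Then the equivalence relation generated by ≼ relates (m₁,m₂) and (n₁,n₂) if and only if m₂ + n₁ = m₁ + n₂. Consequently, the set of connected components of the category 𝒥 is in bijection with ℤ via the degree map (m₁,m₂) ↦ m₂ − m₁. -/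
/-- A morphism datum in the indexing category `𝒥` of Sagave–Schlichtkrull from `(m₁, m₂)` to
`(n₁, n₂)`: a pair of injections `α₁ : Fin m₁ → Fin n₁` and `α₂ : Fin m₂ → Fin n₂` together
with a bijection between the complements of their images. -/
structure JHomDatum (m₁ m₂ n₁ n₂ : ℕ) where
  α₁ : Fin m₁ → Fin n₁
  α₂ : Fin m₂ → Fin n₂
  inj₁ : Function.Injective α₁
  inj₂ : Function.Injective α₂
  ρ : {x : Fin n₁ // x ∉ Set.range α₁} ≃ {y : Fin n₂ // y ∉ Set.range α₂}

/-- The relation `≼` on `ℕ × ℕ`: `(m₁, m₂) ≼ (n₁, n₂)` iff there exists a `𝒥`-morphism datum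
from `(m₁, m₂)` to `(n₁, n₂)`. -/
def JRel (p q : ℕ × ℕ) : Prop := Nonempty (JHomDatum p.1 p.2 q.1 q.2)

lemma card_compl_range {m n : ℕ} (α : Fin m → Fin n) (h : Function.Injective α) :
    Nat.card {x : Fin n // x ∉ Set.range α} = n - m := by
  classical
  have h1 : Nat.card {x : Fin n // x ∈ Set.range α} = m := by
    have h0 := Nat.card_range_of_injective h
    rwa [Nat.card_eq_fintype_card (α := Fin m), Fintype.card_fin] at h0
  have h2 : Fintype.card {x : Fin n // x ∉ Set.range α}
      = Fintype.card (Fin n) - Fintype.card {x : Fin n // x ∈ Set.range α} :=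
    Fintype.card_subtype_compl _
  rw [Nat.card_eq_fintype_card] at h1
  rw [Nat.card_eq_fintype_card, h2, h1, Fintype.card_fin]

lemma jRel_deg {p q : ℕ × ℕ} (h : JRel p q) : p.2 + q.1 = p.1 + q.2 := by
  obtain ⟨d⟩ := h
  have hm1 : p.1 ≤ q.1 := by
    simpa using Fintype.card_le_of_injective _ d.inj₁
  have hm2 : p.2 ≤ q.2 := by
    simpa using Fintype.card_le_of_injective _ d.inj₂
  have hc : q.1 - p.1 = q.2 - p.2 := by
    rw [← card_compl_range d.α₁ d.inj₁, ← card_compl_range d.α₂ d.inj₂]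
    exact Nat.card_eq_of_bijective _ d.ρ.bijective
  omega

lemma jRel_up (m₁ m₂ k : ℕ) : JRel (m₁, m₂) (m₁ + k, m₂ + k) := by
  classical
  have hcard : ∀ (m : ℕ),
      Nat.card {x : Fin (m + k) // x ∉ Set.range (Fin.castAdd k : Fin m → Fin (m + k))} = k := by
    intro m
    rw [card_compl_range _ (Fin.castAdd_injective m k)]
    omega
  have : Nonempty ({x : Fin (m₁ + k) // x ∉ Set.range (Fin.castAdd k)} ≃
      {y : Fin (m₂ + k) // y ∉ Set.range (Fin.castAdd k)}) := by
    rw [← Finite.card_eq, hcard, hcard]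
  obtain ⟨ρ⟩ := this
  exact ⟨⟨Fin.castAdd k, Fin.castAdd k, Fin.castAdd_injective m₁ k,
    Fin.castAdd_injective m₂ k, ρ⟩⟩

lemma eqvGen_deg {p q : ℕ × ℕ} (h : Relation.EqvGen JRel p q) : p.2 + q.1 = p.1 + q.2 := by
  induction h with
  | rel a b hab => exact jRel_deg hab
  | refl a => ring
  | symm a b _ ih => omega
  | trans a b c _ _ ih1 ih2 => omega

lemma eqvGen_of_deg {m₁ m₂ n₁ n₂ : ℕ} (h : m₂ + n₁ = m₁ + n₂) :
    Relation.EqvGen JRel (m₁, m₂) (n₁, n₂) := by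
  refine Relation.EqvGen.trans _ ((m₁ + n₁ : ℕ), (m₂ + n₁ : ℕ)) _
    (Relation.EqvGen.rel _ _ (jRel_up m₁ m₂ n₁)) (Relation.EqvGen.symm _ _ ?_)
  have he : ((m₁ + n₁ : ℕ), (m₂ + n₁ : ℕ)) = ((n₁ + m₁ : ℕ), (n₂ + m₁ : ℕ)) := by
    simp only [Prod.ext_iff]; omega
  rw [he]
  exact Relation.EqvGen.rel _ _ (jRel_up n₁ n₂ m₁)

/-- The equivalence relation generated by `≼` relates `(m₁, m₂)` and `(n₁, n₂)` if and only if
`m₂ + n₁ = m₁ + n₂`.  Consequently, the set of connected components of the category `𝒥`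
(the quotient of the set of objects by this equivalence relation) is in bijection with `ℤ`
via the degree map `(m₁, m₂) ↦ m₂ - m₁`. -/
theorem jRel_eqvGen_iff_and_components_equiv_int :
    (∀ m₁ m₂ n₁ n₂ : ℕ,
      Relation.EqvGen JRel (m₁, m₂) (n₁, n₂) ↔ m₂ + n₁ = m₁ + n₂) ∧
    ∃ e : Quot JRel ≃ ℤ,
      ∀ m₁ m₂ : ℕ, e (Quot.mk JRel (m₁, m₂)) = (m₂ : ℤ) - (m₁ : ℤ) := by
  constructor
  · exact fun m₁ m₂ n₁ n₂ => ⟨fun h => eqvGen_deg h, eqvGen_of_deg⟩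
  · refine ⟨⟨Quot.lift (fun p => (p.2 : ℤ) - (p.1 : ℤ))
      (fun p q h => by have := jRel_deg h; omega),
      fun z => Quot.mk JRel ((-z).toNat, z.toNat), ?_, ?_⟩, fun m₁ m₂ => rfl⟩
    · intro x
      induction x using Quot.ind with
      | _ p =>
        apply Quot.eqvGen_sound
        obtain ⟨m₁, m₂⟩ := p
        apply eqvGen_of_deg
        simp only
        omega
    · intro z
      simp only [Quot.lift]
      omega
end

section
/- Let m₁, m₂, n₁, n₂ be natural numbers, let α₁ : Fin m₁ → Fin n₁ and α₂ : Fin m₂ → Fin n₂ be injective maps, and let ρ be a bijection from the complement of the image of α₁ in Fin n₁ to the complement of the image of α₂ in Fin n₂. Let G be a subgroup of Perm(Fin m₁) × Perm(Fin m₂) whose projection to Perm(Fin m₁) is injective. Suppose σ ∈ Perm(Fin n₂) and (γ₁,γ₂) ∈ G satisfy: α₁ ∘ γ₁ = α₁, σ ∘ α₂ = α₂ ∘ γ₂, and σ(ρ(j)) = ρ(j) for every j in the complement of the image of α₁. Then γ₁ = 1, γ₂ = 1 and σ = 1. Hence the action of Perm(Fin n₂) on the set 𝒥((m₁,m₂),(n₁,n₂))/G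 of G-orbits of morphism data, given by post-composition in the second coordinate, is free. -/
/-- Strong freeness in the second variable for the `𝒥`-space `𝒥((0,0), -)`:
given a morphism datum `(α₁, α₂, ρ)` in `𝒥((m₁,m₂),(n₁,n₂))` and a subgroup
`G ≤ Perm(Fin m₁) × Perm(Fin m₂)` whose projection to the first factor is injective,
if `σ ∈ Perm(Fin n₂)` and `(γ₁, γ₂) ∈ G` satisfy `α₁ ∘ γ₁ = α₁`, `σ ∘ α₂ = α₂ ∘ γ₂` and
`σ(ρ(j)) = ρ(j)` for every `j` in the complement of the image of `α₁`, then
`γ₁ = 1`, `γ₂ = 1` and `σ = 1`.  Hence `Perm(Fin n₂)` acts freely (by post-composition in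
the second coordinate) on the set of `G`-orbits of morphism data. -/
theorem singleObjJSpace_stronglyFree (m₁ m₂ n₁ n₂ : ℕ)
    (α₁ : Fin m₁ → Fin n₁) (α₂ : Fin m₂ → Fin n₂)
    (hα₁ : Function.Injective α₁) (hα₂ : Function.Injective α₂)
    (ρ : {x : Fin n₁ // x ∉ Set.range α₁} ≃ {y : Fin n₂ // y ∉ Set.range α₂})
    (G : Subgroup (Equiv.Perm (Fin m₁) × Equiv.Perm (Fin m₂)))
    (hG : Function.Injective fun g : G =>
      (g : Equiv.Perm (Fin m₁) × Equiv.Perm (Fin m₂)).1)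
    (σ : Equiv.Perm (Fin n₂))
    (γ₁ : Equiv.Perm (Fin m₁)) (γ₂ : Equiv.Perm (Fin m₂)) (hγ : (γ₁, γ₂) ∈ G)
    (h₁ : ∀ i, α₁ (γ₁ i) = α₁ i)
    (h₂ : ∀ i, σ (α₂ i) = α₂ (γ₂ i))
    (h₃ : ∀ j : {x : Fin n₁ // x ∉ Set.range α₁}, σ (ρ j).1 = (ρ j).1) :
    γ₁ = 1 ∧ γ₂ = 1 ∧ σ = 1 := by
  have hg1 : γ₁ = 1 := Equiv.ext fun i => hα₁ (h₁ i)
  have hg2 : γ₂ = 1 := by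
    have : (⟨(γ₁, γ₂), hγ⟩ : G) = (1 : G) := hG (by simp [hg1])
    have := congrArg (fun g : G => (g : Equiv.Perm (Fin m₁) × Equiv.Perm (Fin m₂)).2) this
    simpa using this
  refine ⟨hg1, hg2, Equiv.ext fun y => ?_⟩
  by_cases hy : y ∈ Set.range α₂
  · obtain ⟨i, rfl⟩ := hy
    simp [h₂ i, hg2]
  · have := h₃ (ρ.symm ⟨y, hy⟩)
    simpa using this
end

section
/- For every commutative monoid M, the maps M^{S¹_n} → M^{n+1} sending f to (f(a_{n,0}), f(a_{n,1}), …, f(a_{n,n})) assemble into an isomorphism of simplicial commutative monoids M ⊗ S¹ ≅ B^cy(M), i.e., these maps are bijective monoid homomorphisms compatible with all face and degeneracy maps. Moreover, under this isomorphism, the map M ⊗ S¹ → M induced by the collapse map S¹ → Δ[0] corresponds to the augmentation B^cy(M) → M that multiplies all coordinates of a tuple (with M regarded as a constant simplicial commutative monoid). -/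
abbrev Delta1 (q : ℕ) := {g : Fin (q + 1) → Fin 2 // ∀ i j : Fin (q + 1), i ≤ j → g i ≤ g j}
def IsCst {q : ℕ} (g : Delta1 q) : Prop := ∀ i, g.1 i = g.1 0
instance {q : ℕ} (g : Delta1 q) : Decidable (IsCst g) :=
  inferInstanceAs (Decidable (∀ i, g.1 i = g.1 0))
instance circleSetoid (q : ℕ) : Setoid (Delta1 q) where
  r g g' := g = g' ∨ (IsCst g ∧ IsCst g')
  iseqv := by
    refine ⟨fun g => Or.inl rfl, ?_, ?_⟩
    · rintro g g' (rfl | h)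
      · exact Or.inl rfl
      · exact Or.inr ⟨h.2, h.1⟩
    · rintro g g' g'' (rfl | h) (rfl | h')
      · exact Or.inl rfl
      · exact Or.inr h'
      · exact Or.inr h
      · exact Or.inr ⟨h.1, h'.2⟩
instance (q : ℕ) : DecidableRel (α := Delta1 q) (· ≈ ·) := fun g g' =>
  inferInstanceAs (Decidable (g = g' ∨ (IsCst g ∧ IsCst g')))
def S1q (q : ℕ) : Type := Quotient (circleSetoid q)
instance (q : ℕ) : Fintype (S1q q) := inferInstanceAs (Fintype (Quotient (circleSetoid q)))
instance (q : ℕ) : DecidableEq (S1q q) :=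
  inferInstanceAs (DecidableEq (Quotient (circleSetoid q)))
def aSimplex (q k : ℕ) : Delta1 q :=
  ⟨fun i => if (i : ℕ) < k then 0 else 1, by
    intro i j hij
    have hij' : (i : ℕ) ≤ (j : ℕ) := hij
    dsimp only
    split_ifs with h1 h2
    · exact le_rfl
    · exact Fin.zero_le _
    · exact absurd (by omega) h1
    · exact le_rfl⟩

/-- Precomposition of simplices of `S¹` with a monotone map, i.e. the structure map of the
simplicial set `S¹` associated to a morphism of the simplex category. -/
def S1precomp {p q : ℕ} (θ : Fin (p + 1) → Fin (q + 1)) (hθ : Monotone θ) :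
    S1q q → S1q p :=
  Quotient.map (fun g => ⟨g.1 ∘ θ, fun a b hab => g.2 _ _ (hθ hab)⟩)
    (by
      rintro g g' (rfl | ⟨h, h'⟩)
      · exact Or.inl rfl
      · exact Or.inr ⟨fun a => (h _).trans (h _).symm, fun a => (h' _).trans (h' _).symm⟩)

/-- The map `δ_i^* : S¹_{q+1} → S¹_q` induced by the `i`-th coface `δ_i = Fin.succAbove i`. -/
def S1face {q : ℕ} (i : Fin (q + 2)) : S1q (q + 1) → S1q q :=
  S1precomp i.succAbove (Fin.strictMono_succAbove i).monotone

/-- The map `σ_i^* : S¹_q → S¹_{q+1}` induced by the `i`-th codegeneracy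
`σ_i = Fin.predAbove i`. -/
def S1degen {q : ℕ} (i : Fin (q + 1)) : S1q q → S1q (q + 1) :=
  S1precomp (Fin.predAbove i) (Fin.predAbove_right_monotone i)

/-- Pushforward (transfer) of an `M`-valued function along a map of finite sets, by taking
products over fibers.  For `t = θ^* : S¹_n → S¹_m` this is the structure map
`(M ⊗ S¹)_n → (M ⊗ S¹)_m` of the tensor `M ⊗ S¹`. -/
def transfer {α β : Type*} [Fintype α] [DecidableEq β] {M : Type*} [CommMonoid M]
    (t : α → β) (f : α → M) : β → M :=
  fun b => ∏ a ∈ Finset.univ.filter fun a => t a = b, f a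

/-- The canonical map `(M ⊗ S¹)_q = M^{S¹_q} → M^{q+1} = B^cy_q(M)`,
`f ↦ (f(a_{q,0}), f(a_{q,1}), …, f(a_{q,q}))`. -/
def phiTensor (M : Type*) [CommMonoid M] (q : ℕ) (f : S1q q → M) : Fin (q + 1) → M :=
  fun k => f ⟦aSimplex q k⟧

/-- `i`-th face of the cyclic bar construction (multiplicative). -/
def bcyDM {M : Type*} [CommMonoid M] {q : ℕ} (i : Fin (q + 2)) (x : Fin (q + 2) → M) :
    Fin (q + 1) → M :=
  if i = Fin.last (q + 1) then
    fun j => if j = 0 then x (Fin.last (q + 1)) * x 0 else x j.castSucc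
  else fun j =>
    if (j : ℕ) < (i : ℕ) then x j.castSucc
    else if (j : ℕ) = (i : ℕ) then x j.castSucc * x j.succ
    else x j.succ

/-- `i`-th degeneracy of the cyclic bar construction (multiplicative): inserts the unit
after the `i`-th entry. -/
def bcySM {M : Type*} [CommMonoid M] {q : ℕ} (i : Fin (q + 1)) (x : Fin (q + 1) → M) :
    Fin (q + 2) → M := fun j =>
  if h : (j : ℕ) ≤ (i : ℕ) then x ⟨j, by have := i.isLt; omega⟩
  else if h2 : (j : ℕ) = (i : ℕ) + 1 then 1
  else x ⟨(j : ℕ) - 1, by have := j.isLt; omega⟩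


section Aux

lemma aSimplex_val {q k : ℕ} (i : Fin (q+1)) :
    ((aSimplex q k).1 i : ℕ) = if (i : ℕ) < k then 0 else 1 := by
  simp only [aSimplex]
  split_ifs <;> rfl

lemma delta1_eq_aSimplex {q : ℕ} (g : Delta1 q) : ∃ k ≤ q + 1, g = aSimplex q k := by
  have hP : ∃ n, q + 1 ≤ n ∨ ∃ h : n < q + 1, ((g.1 ⟨n, h⟩ : Fin 2) : ℕ) = 1 :=
    ⟨q + 1, Or.inl le_rfl⟩
  refine ⟨Nat.find hP, Nat.find_le (Or.inl le_rfl), ?_⟩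
  apply Subtype.ext; funext i
  apply Fin.ext
  rw [aSimplex_val]
  split_ifs with h
  · have hm := Nat.find_min hP h
    push_neg at hm
    have h2 := hm.2 i.isLt
    have h3 : ((g.1 i : Fin 2) : ℕ) < 2 := (g.1 i).isLt
    simp only [Fin.eta] at h2
    omega
  · push_neg at h
    have hs := Nat.find_spec hP
    have hlt : Nat.find hP < q + 1 := lt_of_le_of_lt h i.isLt
    rcases hs with hs | ⟨hh, hs⟩
    · omega
    · have := g.2 ⟨Nat.find hP, hh⟩ i (by exact h)
      rw [Fin.le_def] at this
      have h3 : ((g.1 i : Fin 2) : ℕ) < 2 := (g.1 i).isLt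
      omega

lemma isCst_aSimplex {q k : ℕ} : IsCst (aSimplex q k) ↔ (k = 0 ∨ q + 1 ≤ k) := by
  constructor
  · intro h
    by_contra hc
    push_neg at hc
    obtain ⟨h0, h1⟩ := hc
    have := h ⟨k, by omega⟩
    have e1 : (((aSimplex q k).1 ⟨k, by omega⟩ : Fin 2) : ℕ) = 1 := by
      rw [aSimplex_val]; simp
    have e0 : (((aSimplex q k).1 0 : Fin 2) : ℕ) = 0 := by
      rw [aSimplex_val, if_pos (by simp only [Fin.val_zero]; omega)]
    rw [this] at e1; omega
  · intro h i
    apply Fin.ext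
    rw [aSimplex_val, aSimplex_val]
    have h2 := i.isLt
    rcases h with h | h <;> split_ifs <;> omega

lemma aSimplex_inj {q k m : ℕ} (hk : k ≤ q + 1) (hm : m ≤ q + 1)
    (h : aSimplex q k = aSimplex q m) : k = m := by
  by_contra hne
  rcases Nat.lt_or_ge k m with hlt | hge
  · have hc := congrFun (congrArg Subtype.val h) ⟨k, by omega⟩
    have e1 := aSimplex_val (q := q) (k := k) ⟨k, by omega⟩
    have e2 := aSimplex_val (q := q) (k := m) ⟨k, by omega⟩
    rw [hc] at e1
    rw [e2] at e1
    simp only [Fin.val_mk] at e1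
    split_ifs at e1 <;> omega
  · have hlt : m < k := by omega
    have hc := congrFun (congrArg Subtype.val h) ⟨m, by omega⟩
    have e1 := aSimplex_val (q := q) (k := k) ⟨m, by omega⟩
    have e2 := aSimplex_val (q := q) (k := m) ⟨m, by omega⟩
    rw [hc] at e1
    rw [e2] at e1
    simp only [Fin.val_mk] at e1
    split_ifs at e1 <;> omega

lemma class_eq_iff {q k m : ℕ} (hk : k ≤ q + 1) (hm : m ≤ q) :
    (⟦aSimplex q k⟧ : S1q q) = ⟦aSimplex q m⟧ ↔ (k = m ∨ (k = q + 1 ∧ m = 0)) := by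
  rw [Quotient.eq]
  show (aSimplex q k = aSimplex q m ∨ _) ↔ _
  rw [isCst_aSimplex, isCst_aSimplex]
  constructor
  · rintro (h | ⟨h1, h2⟩)
    · exact Or.inl (aSimplex_inj hk (by omega) h)
    · omega
  · rintro (rfl | ⟨rfl, rfl⟩)
    · exact Or.inl rfl
    · exact Or.inr ⟨by omega, by omega⟩

lemma val_succAbove {q : ℕ} (i : Fin (q+2)) (j : Fin (q+1)) :
    (i.succAbove j : ℕ) = if (j:ℕ) < (i:ℕ) then (j:ℕ) else (j:ℕ)+1 := by
  rw [Fin.succAbove]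
  split_ifs with h1 h2 <;> simp_all [Fin.lt_def]

lemma val_predAbove {q : ℕ} (i : Fin (q+1)) (j : Fin (q+2)) :
    (i.predAbove j : ℕ) = if (i:ℕ) < (j:ℕ) then (j:ℕ)-1 else (j:ℕ) := by
  unfold Fin.predAbove
  split_ifs with h1 h2 <;> (rw [Fin.lt_def] at h1; simp at h1 ⊢; try omega)

lemma S1face_aSimplex {q : ℕ} (i : Fin (q+2)) (k : ℕ) :
    S1face i (⟦aSimplex (q+1) k⟧ : S1q (q+1)) =
      ⟦aSimplex q (if (i:ℕ) < k then k - 1 else k)⟧ := by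
  rw [S1face, S1precomp, Quotient.map_mk]
  congr 1
  apply Subtype.ext; funext j
  apply Fin.ext
  show (((aSimplex (q+1) k).1 (i.succAbove j) : Fin 2) : ℕ) = _
  rw [aSimplex_val, aSimplex_val, val_succAbove]
  split_ifs <;> omega

lemma S1degen_aSimplex {q : ℕ} (i : Fin (q+1)) (k : ℕ) :
    S1degen i (⟦aSimplex q k⟧ : S1q q) =
      ⟦aSimplex (q+1) (if (i:ℕ) < k then k + 1 else k)⟧ := by
  rw [S1degen, S1precomp, Quotient.map_mk]
  congr 1
  apply Subtype.ext; funext j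
  apply Fin.ext
  show (((aSimplex q k).1 (i.predAbove j) : Fin 2) : ℕ) = _
  rw [aSimplex_val, aSimplex_val, val_predAbove]
  split_ifs <;> omega

/-- The canonical enumeration of `S¹_q`. -/
def eS1 (q : ℕ) : Fin (q+1) → S1q q := fun k => ⟦aSimplex q k⟧

lemma eS1_bijective (q : ℕ) : Function.Bijective (eS1 q) := by
  constructor
  · intro k m h
    rw [eS1, eS1] at h
    have := (class_eq_iff (q := q) (k := (k:ℕ)) (m := (m:ℕ))
      (by have := k.isLt; omega) (by have := m.isLt; omega)).1 h
    have hk := k.isLt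
    apply Fin.ext
    omega
  · intro g
    induction g using Quotient.ind with
    | _ g =>
      obtain ⟨k, hk, rfl⟩ := delta1_eq_aSimplex g
      rcases Nat.lt_or_ge k (q+1) with h | h
      · exact ⟨⟨k, h⟩, rfl⟩
      · have hk1 : k = q + 1 := by omega
        refine ⟨0, ?_⟩
        show (⟦aSimplex q (((0 : Fin (q+1)):ℕ))⟧ : S1q q) = ⟦aSimplex q k⟧
        subst hk1
        symm
        rw [class_eq_iff le_rfl (by simp)]
        simp

lemma prod_eS1 {q : ℕ} {M : Type*} [CommMonoid M] (h : S1q q → M) :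
    ∏ a, h a = ∏ k : Fin (q+1), h (eS1 q k) :=
  ((Equiv.ofBijective _ (eS1_bijective q)).prod_comp h).symm

lemma transfer_apply {q p : ℕ} {M : Type*} [CommMonoid M] (t : S1q q → S1q p)
    (f : S1q q → M) (b : S1q p) :
    transfer t f b = ∏ k : Fin (q+1), if t (eS1 q k) = b then f (eS1 q k) else 1 := by
  rw [transfer, Finset.prod_filter, prod_eS1]

lemma prod_ite_single {n : ℕ} {M : Type*} [CommMonoid M] (P : Fin n → Prop)
    [DecidablePred P] (k0 : Fin n) (h : ∀ k, P k ↔ k = k0) (F : Fin n → M) :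
    (∏ k, if P k then F k else 1) = F k0 := by
  rw [Finset.prod_congr rfl (fun k _ => if_congr (h k) rfl rfl)]
  simp

lemma prod_ite_pair {n : ℕ} {M : Type*} [CommMonoid M] (P : Fin n → Prop)
    [DecidablePred P] (k0 k1 : Fin n) (hne : k0 ≠ k1)
    (h : ∀ k, P k ↔ (k = k0 ∨ k = k1)) (F : Fin n → M) :
    (∏ k, if P k then F k else 1) = F k0 * F k1 := by
  rw [Finset.prod_congr rfl (fun k _ => if_congr (h k) rfl rfl), ← Finset.prod_filter]
  have : Finset.univ.filter (fun k : Fin n => k = k0 ∨ k = k1) = {k0, k1} := by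
    ext k; simp [Finset.mem_insert]
  rw [this, Finset.prod_pair hne]

lemma prod_ite_empty {n : ℕ} {M : Type*} [CommMonoid M] (P : Fin n → Prop)
    [DecidablePred P] (h : ∀ k, ¬ P k) (F : Fin n → M) :
    (∏ k, if P k then F k else 1) = 1 := by
  apply Finset.prod_eq_one
  intro k _
  rw [if_neg (h k)]

end Aux

/-- For every commutative monoid `M`, the maps `M^{S¹_q} → M^{q+1}`,
`f ↦ (f(a_{q,0}), …, f(a_{q,q}))`, assemble into an isomorphism of simplicial commutative
monoids `M ⊗ S¹ ≅ B^cy(M)`: in each simplicial degree they are bijective monoid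
homomorphisms, and they are compatible with all face and degeneracy maps (on the left the
maps induced on `M ⊗ S¹` by the simplicial structure of `S¹ = Δ[1]/∂Δ[1]` via fiberwise
products, on the right the face and degeneracy maps of the cyclic bar construction).
Moreover, under this isomorphism the map `M ⊗ S¹ → M` induced by the collapse
`S¹ → Δ[0]` corresponds to the augmentation `B^cy(M) → M` multiplying all coordinates. -/
theorem tensor_circle_iso_bcy (M : Type*) [CommMonoid M] :
    (∀ q : ℕ, Function.Bijective (phiTensor M q)) ∧
    (∀ (q : ℕ) (f g : S1q q → M),
      phiTensor M q (f * g) = phiTensor M q f * phiTensor M q g) ∧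
    (∀ (q : ℕ) (i : Fin (q + 2)) (f : S1q (q + 1) → M),
      phiTensor M q (transfer (S1face i) f) = bcyDM i (phiTensor M (q + 1) f)) ∧
    (∀ (q : ℕ) (i : Fin (q + 1)) (f : S1q q → M),
      phiTensor M (q + 1) (transfer (S1degen i) f) = bcySM i (phiTensor M q f)) ∧
    (∀ (q : ℕ) (f : S1q q → M), ∏ a, f a = ∏ k, phiTensor M q f k) := by
  refine ⟨?_, ?_, ?_, ?_, ?_⟩
  · -- bijectivity
    intro q
    constructor
    · intro f g h
      funext a
      obtain ⟨k, rfl⟩ := (eS1_bijective q).2 a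
      exact congrFun h k
    · intro x
      refine ⟨fun a => x ((Equiv.ofBijective _ (eS1_bijective q)).symm a), ?_⟩
      funext k
      show x ((Equiv.ofBijective _ (eS1_bijective q)).symm (eS1 q k)) = x k
      exact congrArg x ((Equiv.ofBijective _ (eS1_bijective q)).symm_apply_apply k)
  · -- multiplicativity
    intro q f g
    rfl
  · -- faces
    intro q i f
    funext m
    have hi2 := i.isLt
    have hmv := m.isLt
    show transfer (S1face i) f (eS1 q m) = _
    rw [transfer_apply]
    have hcond : ∀ k : Fin (q+2), (S1face i (eS1 (q+1) k) = eS1 q m) ↔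
        ((if (i:ℕ) < (k:ℕ) then (k:ℕ) - 1 else (k:ℕ)) = (m:ℕ) ∨
         ((if (i:ℕ) < (k:ℕ) then (k:ℕ) - 1 else (k:ℕ)) = q + 1 ∧ (m:ℕ) = 0)) := by
      intro k
      rw [show eS1 (q+1) k = ⟦aSimplex (q+1) (k:ℕ)⟧ from rfl, S1face_aSimplex]
      exact class_eq_iff (by have := k.isLt; split_ifs <;> omega) (by omega)
    by_cases hil : i = Fin.last (q+1)
    · have hival : (i:ℕ) = q+1 := by rw [hil]; simp
      simp only [bcyDM]
      rw [if_pos hil]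
      by_cases hm0 : (m:ℕ) = 0
      · rw [if_pos (show m = 0 from Fin.ext (by simpa using hm0))]
        rw [prod_ite_pair _ (0 : Fin (q+2)) (Fin.last (q+1))
          (by simp [Fin.ext_iff]) ?_]
        · exact mul_comm _ _
        · intro k
          rw [hcond k, Fin.ext_iff, Fin.ext_iff]
          simp only [Fin.val_last, Fin.val_zero]
          have := k.isLt
          split_ifs <;> omega
      · rw [if_neg (show ¬ m = 0 from fun h => hm0 (by simp [h]))]
        have hm0' : (m:ℕ) ≠ 0 := hm0
        rw [prod_ite_single _ m.castSucc ?_]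
        · rfl
        · intro k
          rw [hcond k, Fin.ext_iff]
          simp only [Fin.coe_castSucc]
          have := k.isLt
          split_ifs <;> omega
    · have hival : (i:ℕ) ≤ q := by
        have hne : (i:ℕ) ≠ q+1 := fun h => hil (Fin.ext (by simp [h]))
        omega
      simp only [bcyDM]
      rw [if_neg hil]
      rcases lt_trichotomy ((m:ℕ)) ((i:ℕ)) with h1 | h1 | h1
      · rw [if_pos h1]
        rw [prod_ite_single _ m.castSucc ?_]
        · rfl
        · intro k
          rw [hcond k, Fin.ext_iff]
          simp only [Fin.coe_castSucc]
          have := k.isLt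
          split_ifs <;> omega
      · rw [if_neg (by omega), if_pos h1]
        rw [prod_ite_pair _ m.castSucc m.succ (by simp [Fin.ext_iff]) ?_]
        · rfl
        · intro k
          rw [hcond k, Fin.ext_iff, Fin.ext_iff]
          simp only [Fin.coe_castSucc, Fin.val_succ]
          have := k.isLt
          split_ifs <;> omega
      · rw [if_neg (by omega), if_neg (by omega)]
        rw [prod_ite_single _ m.succ ?_]
        · rfl
        · intro k
          rw [hcond k, Fin.ext_iff]
          simp only [Fin.val_succ]
          have := k.isLt
          split_ifs <;> omega
  · -- degeneracies
    intro q i f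
    funext m
    have him := i.isLt
    have hmm := m.isLt
    show transfer (S1degen i) f (eS1 (q+1) m) = _
    rw [transfer_apply]
    have hcond : ∀ k : Fin (q+1), (S1degen i (eS1 q k) = eS1 (q+1) m) ↔
        ((if (i:ℕ) < (k:ℕ) then (k:ℕ) + 1 else (k:ℕ)) = (m:ℕ) ∨
         ((if (i:ℕ) < (k:ℕ) then (k:ℕ) + 1 else (k:ℕ)) = q + 2 ∧ (m:ℕ) = 0)) := by
      intro k
      rw [show eS1 q k = ⟦aSimplex q (k:ℕ)⟧ from rfl, S1degen_aSimplex]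
      exact class_eq_iff (q := q+1) (by have := k.isLt; split_ifs <;> omega) (by omega)
    simp only [bcySM]
    by_cases h1 : (m:ℕ) ≤ (i:ℕ)
    · rw [dif_pos h1]
      rw [prod_ite_single _ ⟨(m:ℕ), by omega⟩ ?_]
      · rfl
      · intro k
        rw [hcond k, Fin.ext_iff]
        simp only [Fin.val_mk]
        have := k.isLt
        split_ifs <;> omega
    · by_cases h2 : (m:ℕ) = (i:ℕ) + 1
      · rw [dif_neg h1, dif_pos h2]
        apply prod_ite_empty
        intro k
        rw [hcond k]
        have := k.isLt
        split_ifs <;> omega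
      · rw [dif_neg h1, dif_neg h2]
        rw [prod_ite_single _ ⟨(m:ℕ) - 1, by omega⟩ ?_]
        · rfl
        · intro k
          rw [hcond k, Fin.ext_iff]
          simp only [Fin.val_mk]
          have := k.isLt
          split_ifs <;> omega
  · -- collapse / augmentation
    intro q f
    exact prod_eS1 f
end
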